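/- For positive continuous functions ρ, σ on [-1,1], define λ₁(ρ,σ) as the infimum of the Rayleigh quotients (∫_{-1}^{1} u'(t)² σ(t) dt) / (∫_{-1}^{1} u(t)² ρ(t) dt) over all C¹ functions u on [-1,1] with ∫_{-1}^{1} u(t) ρ(t) dt = 0 and u not identically zero. Then for every α ∈ (0,1) and every real number B, there exists a positive continuous function ρ on [-1,1] with ∫_{-1}^{1} ρ(t) dt = 2 such that λ₁(ρ, ρ^α) ≥ B. In other words, sup{ λ₁(ρ, ρ^α) : ρ positive continuous on [-1,1] with ∫_{-1}^{1} ρ dt = 2 } = +∞. -/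

import Mathlib

open MeasureTheory

set_option maxHeartbeats 1000000

open Set intervalIntegral

lemma cs_integral {a b : ℝ} (hab : a ≤ b) {g w : ℝ → ℝ}
    (hg : ContinuousOn g (Icc a b)) (hw : ContinuousOn w (Icc a b))
    (hwpos : ∀ t ∈ Icc a b, 0 < w t) :
    (∫ t in a..b, g t) ^ 2 ≤
      (∫ t in a..b, g t ^ 2 * w t) * ∫ t in a..b, (w t)⁻¹ := by
  set X := ∫ t in a..b, g t ^ 2 * w t with hX
  set T := ∫ t in a..b, g t with hT
  set Y := ∫ t in a..b, (w t)⁻¹ with hY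
  have hwne : ∀ t ∈ Icc a b, w t ≠ 0 := fun t ht => (hwpos t ht).ne'
  have hXi : IntervalIntegrable (fun t => g t ^ 2 * w t) volume a b :=
    ContinuousOn.intervalIntegrable (by rw [uIcc_of_le hab]; exact (hg.pow 2).mul hw)
  have hTi : IntervalIntegrable g volume a b :=
    ContinuousOn.intervalIntegrable (by rw [uIcc_of_le hab]; exact hg)
  have hYi : IntervalIntegrable (fun t => (w t)⁻¹) volume a b :=
    ContinuousOn.intervalIntegrable (by rw [uIcc_of_le hab]; exact hw.inv₀ hwne)
  have key : ∀ lam : ℝ, 0 ≤ X * (lam * lam) + (-2 * T) * lam + Y := by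
    intro lam
    have h1 : ∀ t ∈ Icc a b,
        0 ≤ lam ^ 2 * (g t ^ 2 * w t) + ((-2 * lam) * g t + (w t)⁻¹) := by
      intro t ht
      have hwt := hwpos t ht
      set s := Real.sqrt (w t) with hs
      have hss : s * s = w t := Real.mul_self_sqrt hwt.le
      have hsne : s ≠ 0 := by positivity
      have hs1 : s * s⁻¹ = 1 := mul_inv_cancel₀ hsne
      have hinv : s⁻¹ * s⁻¹ = (w t)⁻¹ := by rw [← mul_inv, hss]
      have hexp : (lam * g t * s - s⁻¹) ^ 2
          = lam ^ 2 * (g t ^ 2 * (s * s)) - 2 * (lam * g t) * (s * s⁻¹)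
            + s⁻¹ * s⁻¹ := by ring
      rw [hss, hs1, hinv] at hexp
      have := sq_nonneg (lam * g t * s - s⁻¹)
      rw [hexp] at this
      linarith
    have h2 : 0 ≤ ∫ t in a..b,
        (lam ^ 2 * (g t ^ 2 * w t) + ((-2 * lam) * g t + (w t)⁻¹)) :=
      intervalIntegral.integral_nonneg hab h1
    have h3 : (∫ t in a..b,
        (lam ^ 2 * (g t ^ 2 * w t) + ((-2 * lam) * g t + (w t)⁻¹)))
        = lam ^ 2 * X + ((-2 * lam) * T + Y) := by
      rw [intervalIntegral.integral_add (hXi.const_mul _)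
          ((hTi.const_mul _).add hYi),
        intervalIntegral.integral_add (hTi.const_mul _) hYi,
        intervalIntegral.integral_const_mul, intervalIntegral.integral_const_mul]
    rw [h3] at h2
    nlinarith [h2]
  have hd := discrim_le_zero key
  rw [discrim] at hd
  nlinarith [hd]

lemma integral_pos_of_contOn {g : ℝ → ℝ} (hg : ContinuousOn g (Icc (-1) 1))
    (hnn : ∀ t, 0 ≤ g t) (t₀ : ℝ) (ht₀ : t₀ ∈ Icc (-1:ℝ) 1) (hpos : 0 < g t₀) :
    0 < ∫ t in (-1:ℝ)..1, g t := by
  rw [intervalIntegral.integral_pos_iff_support_of_nonneg_ae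
    (Filter.Eventually.of_forall hnn)
    (ContinuousOn.intervalIntegrable (by
      rw [uIcc_of_le (by norm_num : (-1:ℝ) ≤ 1)]; exact hg))]
  refine ⟨by norm_num, ?_⟩
  have hcw : ContinuousWithinAt g (Icc (-1:ℝ) 1) t₀ := hg t₀ ht₀
  have hev : ∀ᶠ t in nhdsWithin t₀ (Icc (-1:ℝ) 1), 0 < g t :=
    hcw.eventually (eventually_gt_nhds hpos)
  obtain ⟨ε, hε, hsub⟩ := Metric.mem_nhdsWithin_iff.mp hev
  set a' : ℝ := max (-1) (t₀ - ε) with ha'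
  set b' : ℝ := min 1 (t₀ + ε) with hb'
  have ht1 := ht₀.1
  have ht2 := ht₀.2
  have hab' : a' < b' := by
    simp only [ha', hb', max_lt_iff, lt_min_iff]
    refine ⟨⟨by norm_num, by linarith⟩, ⟨by linarith, by linarith⟩⟩
  have hsub2 : Ioo a' b' ⊆ Function.support g ∩ Ioc (-1:ℝ) 1 := by
    intro t ht
    have hta : a' < t := ht.1
    have htb : t < b' := ht.2
    have h1a : t₀ - ε < t := lt_of_le_of_lt (le_max_right _ _) hta
    have h1b : t < t₀ + ε := lt_of_lt_of_le htb (min_le_right _ _)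
    have h2a : (-1:ℝ) < t := lt_of_le_of_lt (le_max_left _ _) hta
    have h2b : t < 1 := lt_of_lt_of_le htb (min_le_left _ _)
    have hball : t ∈ Metric.ball t₀ ε ∩ Icc (-1:ℝ) 1 := by
      constructor
      · rw [Metric.mem_ball, Real.dist_eq, abs_lt]
        constructor <;> linarith
      · exact ⟨h2a.le, h2b.le⟩
    have hgt : 0 < g t := hsub hball
    exact ⟨hgt.ne', ⟨h2a, h2b.le⟩⟩
  calc (0:ENNReal) < volume (Ioo a' b') := by
        rw [Real.volume_Ioo]; exact ENNReal.ofReal_pos.mpr (by linarith)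
    _ ≤ volume (Function.support g ∩ Ioc (-1:ℝ) 1) := measure_mono hsub2

/-- The first nonzero Neumann eigenvalue of `-(σ u')' = λ ρ u` on `(-1, 1)`:
the infimum of the Rayleigh quotients `∫ (u')² σ / ∫ u² ρ` over `C¹` functions
`u` on `[-1, 1]` with `∫ u ρ = 0` and `u` not identically zero. -/
noncomputable def lambda1 (ρ σ : ℝ → ℝ) : ℝ :=
  sInf {Q : ℝ | ∃ u u' : ℝ → ℝ,
    (∀ t ∈ Set.Icc (-1 : ℝ) 1, HasDerivWithinAt u (u' t) (Set.Icc (-1) 1) t) ∧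
    ContinuousOn u' (Set.Icc (-1) 1) ∧
    (∫ t in (-1 : ℝ)..1, u t * ρ t) = 0 ∧
    (∃ t ∈ Set.Icc (-1 : ℝ) 1, u t ≠ 0) ∧
    Q = (∫ t in (-1 : ℝ)..1, u' t ^ 2 * σ t) / ∫ t in (-1 : ℝ)..1, u t ^ 2 * ρ t}

/-- Proposition 3.3 of the paper: in dimension one, for every `α ∈ (0,1)` the
supremum of `λ₁(ρ, ρ^α)` over mass-normalised positive continuous densities
(`∫_{-1}^{1} ρ = 2`) is infinite. -/
theorem lambda1_sup_infinite (α : ℝ) (hα : α ∈ Set.Ioo (0 : ℝ) 1) (B : ℝ) :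
    ∃ ρ : ℝ → ℝ, ContinuousOn ρ (Set.Icc (-1) 1) ∧
      (∀ t ∈ Set.Icc (-1 : ℝ) 1, 0 < ρ t) ∧
      (∫ t in (-1 : ℝ)..1, ρ t) = 2 ∧
      B ≤ lambda1 ρ (fun t => ρ t ^ α) := by
  obtain ⟨hα0, hα1⟩ := hα
  have hα1' : (0:ℝ) < 1 - α := by linarith
  -- the parameters
  set B' : ℝ := max B 1 with hB'def
  have hB'1 : (1:ℝ) ≤ B' := le_max_right _ _
  have hB'0 : (0:ℝ) < B' := by linarith
  set m : ℝ := max 1 ((2 * B') ^ ((2:ℝ)/α)) with hmdef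
  have hm1 : (1:ℝ) ≤ m := le_max_left _ _
  have hm0 : (0:ℝ) < m := by linarith
  have hsm : (0:ℝ) < Real.sqrt m := Real.sqrt_pos.mpr hm0
  have hmB : 2 * B' ≤ m ^ (α/2) := by
    have h1 : ((2*B') ^ ((2:ℝ)/α)) ^ (α/2) ≤ m ^ (α/2) :=
      Real.rpow_le_rpow (Real.rpow_nonneg (by linarith) _) (le_max_right _ _)
        (by positivity)
    calc 2 * B' = (2*B') ^ ((2/α) * (α/2)) := by
          rw [show (2/α) * (α/2) = 1 by field_simp, Real.rpow_one]
      _ = ((2*B') ^ ((2:ℝ)/α)) ^ (α/2) := Real.rpow_mul (by linarith) _ _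
      _ ≤ m ^ (α/2) := h1
  set β : ℝ := (1-α)⁻¹ with hβdef
  have hβ0 : 0 < β := by positivity
  have hβ1 : β * (1 - α) = 1 := inv_mul_cancel₀ (ne_of_gt hα1')
  set γ : ℝ := β * α with hγdef
  have hγ0 : 0 ≤ γ := by positivity
  have hγβ : γ - β = -1 := by
    have : β * (1-α) = 1 := hβ1
    simp only [hγdef]; nlinarith
  -- the base profile
  set X : ℝ → ℝ := fun t => 1 + m * t^2 with hXdef
  have hX1 : ∀ t, (1:ℝ) ≤ X t := by intro t; simp only [hXdef]; nlinarith [sq_nonneg t]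
  have hX0 : ∀ t, (0:ℝ) < X t := fun t => lt_of_lt_of_le one_pos (hX1 t)
  have hXcont : Continuous X := by continuity
  set f : ℝ → ℝ := fun t => X t ^ (-β) with hfdef
  have hfpos : ∀ t, 0 < f t := fun t => Real.rpow_pos_of_pos (hX0 t) _
  have hfcont : Continuous f :=
    hXcont.rpow_const (fun t => Or.inl (hX0 t).ne')
  set N : ℝ := ∫ t in (-1:ℝ)..1, f t with hNdef
  -- lower bound for N
  have hNlow : 2 * (Real.sqrt m)⁻¹ * 2 ^ (-β) ≤ N := by
    set s : ℝ := (Real.sqrt m)⁻¹ with hsdef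
    have hs0 : 0 < s := by positivity
    have hsqm : 1 ≤ Real.sqrt m := by
      rw [show (1:ℝ) = Real.sqrt 1 by simp]
      exact Real.sqrt_le_sqrt hm1
    have hs1 : s ≤ 1 := by
      rw [hsdef]
      exact inv_le_one_of_one_le₀ hsqm
    have hfi : IntervalIntegrable f volume (-1) 1 := hfcont.intervalIntegrable _ _
    have step1 : (∫ t in (-s)..s, f t) ≤ N :=
      intervalIntegral.integral_mono_interval (by linarith) (by linarith) hs1
        (Filter.Eventually.of_forall fun t => (hfpos t).le) hfi
    have step2 : 2 * s * 2 ^ (-β) ≤ ∫ t in (-s)..s, f t := by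
      have hpt : ∀ t ∈ Icc (-s) s, (2:ℝ) ^ (-β) ≤ f t := by
        intro t ht
        have ht2 : t^2 ≤ s^2 := sq_le_sq' ht.1 ht.2
        have hs2 : s^2 = m⁻¹ := by
          rw [hsdef, ← Real.sqrt_inv, Real.sq_sqrt (by positivity)]
        have hXle : X t ≤ 2 := by
          have : m * t^2 ≤ 1 := by
            calc m * t^2 ≤ m * m⁻¹ := by
                  apply mul_le_mul_of_nonneg_left _ hm0.le
                  rw [← hs2]; exact ht2
              _ = 1 := mul_inv_cancel₀ hm0.ne'
          simp only [hXdef]; linarith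
        exact Real.rpow_le_rpow_of_nonpos (hX0 t) hXle (by linarith)
      have := intervalIntegral.integral_mono_on (by linarith : -s ≤ s)
        (intervalIntegrable_const (μ := volume)) (hfcont.intervalIntegrable _ _) hpt
      rw [intervalIntegral.integral_const, smul_eq_mul] at this
      calc 2 * s * 2 ^ (-β) = (s - -s) * 2 ^ (-β) := by ring
        _ ≤ ∫ t in (-s)..s, f t := this
    calc 2 * (Real.sqrt m)⁻¹ * 2 ^ (-β) = 2 * s * 2 ^ (-β) := by rw [hsdef]
      _ ≤ ∫ t in (-s)..s, f t := step2
      _ ≤ N := step1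
  have hNpos : 0 < N := lt_of_lt_of_le (by positivity) hNlow
  set c : ℝ := 2 / N with hcdef
  have hc0 : 0 < c := by positivity
  have hcle : c ≤ 2 ^ β * Real.sqrt m := by
    rw [hcdef, div_le_iff₀ hNpos]
    calc (2:ℝ) = 2 ^ β * Real.sqrt m * (2 * (Real.sqrt m)⁻¹ * 2 ^ (-β)) := by
          rw [Real.rpow_neg (by norm_num)]
          field_simp
      _ ≤ 2 ^ β * Real.sqrt m * N := by
          apply mul_le_mul_of_nonneg_left hNlow (by positivity)
  set ρ : ℝ → ℝ := fun t => c * f t with hρdef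
  have hρpos : ∀ t, 0 < ρ t := fun t => by positivity
  have hρcont : Continuous ρ := continuous_const.mul hfcont
  have hmass : (∫ t in (-1:ℝ)..1, ρ t) = 2 := by
    rw [hρdef]
    rw [intervalIntegral.integral_const_mul]
    rw [hcdef]; field_simp
    exact hNdef.symm
  refine ⟨ρ, hρcont.continuousOn, fun t _ => hρpos t, hmass, ?_⟩
  -- now the eigenvalue bound
  set σ : ℝ → ℝ := fun t => ρ t ^ α with hσdef
  have hσpos : ∀ t, 0 < σ t := fun t => Real.rpow_pos_of_pos (hρpos t) _
  have hσcont : Continuous σ := hρcont.rpow_const (fun t => Or.inl (hρpos t).ne')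
  have hσinv : ∀ t, (σ t)⁻¹ = c ^ (-α) * X t ^ γ := by
    intro t
    have h1 : σ t = c ^ α * X t ^ (-γ) := by
      rw [hσdef]
      simp only [hρdef, hfdef]
      rw [Real.mul_rpow hc0.le (Real.rpow_nonneg (hX0 t).le _),
        ← Real.rpow_mul (hX0 t).le]
      congr 1
      · congr 1; simp only [hγdef]; ring
    rw [h1, mul_inv, ← Real.rpow_neg hc0.le, ← Real.rpow_neg (hX0 t).le, neg_neg]
  -- lambda1 bound
  have hmain : B' ≤ lambda1 ρ σ := by
    have hIcc : ((-1:ℝ)) ≤ 1 := by norm_num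
    apply le_csInf
    · -- nonempty
      set k : ℝ := (∫ t in (-1:ℝ)..1, t * ρ t) / 2 with hkdef
      refine ⟨_, fun t => t - k, fun _ => 1, fun t _ =>
        ((hasDerivAt_id t).sub_const k).hasDerivWithinAt, continuousOn_const,
        ?_, ?_, rfl⟩
      · have h1 : ∀ t : ℝ, (t - k) * ρ t = t * ρ t - k * ρ t := fun t => by ring
        simp only [h1]
        have ia : IntervalIntegrable (fun t : ℝ => t * ρ t) volume (-1) 1 :=
          (continuous_id'.mul hρcont).intervalIntegrable _ _
        have ib : IntervalIntegrable (fun t : ℝ => k * ρ t) volume (-1) 1 :=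
          (continuous_const.mul hρcont).intervalIntegrable _ _
        rw [intervalIntegral.integral_sub ia ib,
          intervalIntegral.integral_const_mul, hmass, hkdef]
        ring
      · by_cases hk : k ≤ 0
        · exact ⟨1, by norm_num, by intro h; simp at h; linarith⟩
        · exact ⟨-1, by norm_num, by intro h; simp at h; linarith⟩
    · rintro Q ⟨u, u', hderiv, hu'cont, horth, ⟨t₀, ht₀, hu₀⟩, rfl⟩
      have hucont : ContinuousOn u (Icc (-1:ℝ) 1) := fun t ht =>
        (hderiv t ht).continuousWithinAt
      set A : ℝ := ∫ t in (-1:ℝ)..1, u' t ^ 2 * σ t with hAdef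
      set D : ℝ := ∫ t in (-1:ℝ)..1, u t ^ 2 * ρ t with hDdef
      have hA0 : 0 ≤ A := intervalIntegral.integral_nonneg hIcc
        (fun t _ => mul_nonneg (sq_nonneg _) (hσpos t).le)
      have hDpos : 0 < D := by
        apply integral_pos_of_contOn ((hucont.pow 2).mul hρcont.continuousOn)
          (fun t => mul_nonneg (sq_nonneg _) (hρpos t).le) t₀ ht₀
        exact mul_pos (sq_pos_of_ne_zero hu₀) (hρpos t₀)
      have hInt1 : IntervalIntegrable (fun t => u' t ^ 2 * σ t) volume (-1) 1 :=
        ContinuousOn.intervalIntegrable (by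
          rw [uIcc_of_le hIcc]; exact (hu'cont.pow 2).mul hσcont.continuousOn)
      -- Cauchy-Schwarz step
      have key : ∀ a b : ℝ, -1 ≤ a → a ≤ b → b ≤ 1 → ∀ R : ℝ,
          (∀ t ∈ Icc a b, (σ t)⁻¹ ≤ R) →
          (∫ t in a..b, u' t) ^ 2 ≤ A * ((b - a) * R) := by
        intro a b ha hab hb R hR
        have hsub : Icc a b ⊆ Icc (-1:ℝ) 1 := Icc_subset_Icc ha hb
        have hCS := cs_integral hab (hu'cont.mono hsub)
          (hσcont.continuousOn.mono hsub) (fun t _ => hσpos t)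
        have f1 : (∫ t in a..b, u' t ^ 2 * σ t) ≤ A :=
          intervalIntegral.integral_mono_interval ha hab hb
            (Filter.Eventually.of_forall fun t =>
              mul_nonneg (sq_nonneg _) (hσpos t).le) hInt1
        have f2 : (∫ t in a..b, (σ t)⁻¹) ≤ (b - a) * R := by
          have h := intervalIntegral.integral_mono_on hab
            (ContinuousOn.intervalIntegrable (by
              rw [uIcc_of_le hab]
              exact (hσcont.continuousOn.mono hsub).inv₀
                (fun t _ => (hσpos t).ne')))
            (intervalIntegrable_const (μ := volume)) hR
          rwa [intervalIntegral.integral_const, smul_eq_mul] at h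
        have f20 : 0 ≤ ∫ t in a..b, (σ t)⁻¹ :=
          intervalIntegral.integral_nonneg hab
            (fun t _ => inv_nonneg.mpr (hσpos t).le)
        calc (∫ t in a..b, u' t) ^ 2
            ≤ (∫ t in a..b, u' t ^ 2 * σ t) * ∫ t in a..b, (σ t)⁻¹ := hCS
          _ ≤ A * ((b - a) * R) := mul_le_mul f1 f2 f20 hA0
      -- FTC
      have ftc : ∀ a b : ℝ, -1 ≤ a → a ≤ b → b ≤ 1 →
          (∫ t in a..b, u' t) = u b - u a := by
        intro a b ha hab hb
        apply intervalIntegral.integral_eq_sub_of_hasDeriv_right_of_le hab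
          (hucont.mono (Icc_subset_Icc ha hb))
          (fun x hx => ?_)
          (ContinuousOn.intervalIntegrable (by
            rw [uIcc_of_le hab]; exact hu'cont.mono (Icc_subset_Icc ha hb)))
        have hxm : x ∈ Ioo (-1:ℝ) 1 :=
          ⟨lt_of_le_of_lt ha hx.1, lt_of_lt_of_le hx.2 hb⟩
        exact ((hderiv x (Ioo_subset_Icc_self hxm)).hasDerivAt
          (Icc_mem_nhds hxm.1 hxm.2)).hasDerivWithinAt
      -- pointwise bound
      set K : ℝ := c ^ (1-α) * (2 * Real.sqrt m)⁻¹ with hKdef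
      have hptw : ∀ x ∈ Icc (-1:ℝ) 1, (u x - u 0) ^ 2 * ρ x ≤ A * K := by
        intro x hx
        set R : ℝ := c ^ (-α) * X x ^ γ with hRdef
        have hRb : ∀ t : ℝ, t ^ 2 ≤ x ^ 2 → (σ t)⁻¹ ≤ R := by
          intro t ht
          rw [hσinv t, hRdef]
          apply mul_le_mul_of_nonneg_left _ (Real.rpow_nonneg hc0.le _)
          apply Real.rpow_le_rpow (hX0 t).le _ hγ0
          simp only [hXdef]
          nlinarith [hm0]
        have hb2 : (u x - u 0) ^ 2 ≤ A * (|x| * R) := by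
          rcases le_total 0 x with h0x | hx0
          · have hk := key 0 x (by norm_num) h0x hx.2 R
              (fun t ht => hRb t (sq_le_sq' (by linarith [ht.1]) ht.2))
            rw [ftc 0 x (by norm_num) h0x hx.2] at hk
            rw [abs_of_nonneg h0x]
            simpa using hk
          · have hk := key x 0 hx.1 hx0 (by norm_num) R
              (fun t ht => hRb t (by nlinarith [ht.1, ht.2]))
            rw [ftc x 0 hx.1 hx0 (by norm_num)] at hk
            have he : (u 0 - u x) ^ 2 = (u x - u 0) ^ 2 := by ring
            rw [he] at hk
            rw [abs_of_nonpos hx0]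
            simpa using hk
        have halg : (A * (|x| * R)) * ρ x = A * (c ^ (1-α) * (|x| * (X x)⁻¹)) := by
          have e1 : c ^ (1-α) = c ^ (-α) * c := by
            rw [show (1:ℝ) - α = -α + 1 by ring, Real.rpow_add_one hc0.ne']
          have e2 : X x ^ γ * X x ^ (-β) = (X x)⁻¹ := by
            rw [← Real.rpow_add (hX0 x), show γ + -β = -1 by linarith [hγβ],
              Real.rpow_neg_one]
          calc (A * (|x| * R)) * ρ x
              = A * ((c ^ (-α) * c) * (|x| * (X x ^ γ * X x ^ (-β)))) := by
                rw [hRdef]; simp only [hρdef, hfdef]; ring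
            _ = A * (c ^ (1-α) * (|x| * (X x)⁻¹)) := by rw [← e1, e2]
        have hxb : |x| * (X x)⁻¹ ≤ (2 * Real.sqrt m)⁻¹ := by
          have hss : Real.sqrt m ^ 2 = m := Real.sq_sqrt hm0.le
          have h2 : 2 * Real.sqrt m * |x| ≤ X x := by
            simp only [hXdef]
            nlinarith [sq_nonneg (Real.sqrt m * |x| - 1), sq_abs x]
          rw [← div_eq_mul_inv, div_le_iff₀ (hX0 x)]
          calc |x| = (2 * Real.sqrt m)⁻¹ * (2 * Real.sqrt m * |x|) := by
                field_simp
            _ ≤ (2 * Real.sqrt m)⁻¹ * X x :=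
                mul_le_mul_of_nonneg_left h2 (by positivity)
        calc (u x - u 0) ^ 2 * ρ x ≤ (A * (|x| * R)) * ρ x :=
              mul_le_mul_of_nonneg_right hb2 (hρpos x).le
          _ = A * (c ^ (1-α) * (|x| * (X x)⁻¹)) := halg
          _ ≤ A * (c ^ (1-α) * (2 * Real.sqrt m)⁻¹) := by
              apply mul_le_mul_of_nonneg_left _ hA0
              exact mul_le_mul_of_nonneg_left hxb (Real.rpow_nonneg hc0.le _)
          _ = A * K := by rw [hKdef]
      -- integrate the pointwise bound
      have hDle : D ≤ ∫ x in (-1:ℝ)..1, (u x - u 0) ^ 2 * ρ x := by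
        have i1 : IntervalIntegrable (fun x => u x ^ 2 * ρ x) volume (-1) 1 :=
          ContinuousOn.intervalIntegrable (by
            rw [uIcc_of_le hIcc]; exact (hucont.pow 2).mul hρcont.continuousOn)
        have i2 : IntervalIntegrable (fun x => (2 * u 0) * (u x * ρ x))
            volume (-1) 1 :=
          ContinuousOn.intervalIntegrable (by
            rw [uIcc_of_le hIcc]
            exact continuousOn_const.mul (hucont.mul hρcont.continuousOn))
        have i3 : IntervalIntegrable (fun x => (u 0) ^ 2 * ρ x) volume (-1) 1 :=
          ContinuousOn.intervalIntegrable (by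
            rw [uIcc_of_le hIcc]; exact continuousOn_const.mul hρcont.continuousOn)
        have hexp : ∀ x : ℝ, (u x - u 0) ^ 2 * ρ x
            = u x ^ 2 * ρ x - (2 * u 0) * (u x * ρ x) + (u 0) ^ 2 * ρ x :=
          fun x => by ring
        have heq : (∫ x in (-1:ℝ)..1, (u x - u 0) ^ 2 * ρ x)
            = D - (2 * u 0) * (∫ x in (-1:ℝ)..1, u x * ρ x)
              + (u 0) ^ 2 * (∫ x in (-1:ℝ)..1, ρ x) := by
          simp only [hexp]
          rw [intervalIntegral.integral_add (i1.sub i2) i3,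
            intervalIntegral.integral_sub i1 i2,
            intervalIntegral.integral_const_mul,
            intervalIntegral.integral_const_mul]
        rw [heq, horth, hmass]
        nlinarith [sq_nonneg (u 0)]
      have hDle2 : D ≤ 2 * (A * K) := by
        have hi : IntervalIntegrable (fun x => (u x - u 0) ^ 2 * ρ x)
            volume (-1) 1 :=
          ContinuousOn.intervalIntegrable (by
            rw [uIcc_of_le hIcc]
            exact ((hucont.sub continuousOn_const).pow 2).mul
              hρcont.continuousOn)
        have h := intervalIntegral.integral_mono_on hIcc hi
          (intervalIntegrable_const (μ := volume)) hptw
        rw [intervalIntegral.integral_const, smul_eq_mul] at h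
        calc D ≤ ∫ x in (-1:ℝ)..1, (u x - u 0) ^ 2 * ρ x := hDle
          _ ≤ (1 - (-1)) * (A * K) := h
          _ = 2 * (A * K) := by norm_num
      -- numeric bound on K
      have h2K : 2 * K ≤ 1 / B' := by
        have hc1 : c ^ (1-α) ≤ 2 * m ^ ((1-α)/2) := by
          calc c ^ (1-α) ≤ ((2:ℝ) ^ β * Real.sqrt m) ^ (1-α) :=
                Real.rpow_le_rpow hc0.le hcle (by linarith)
            _ = ((2:ℝ) ^ β) ^ (1-α) * (Real.sqrt m) ^ (1-α) :=
                Real.mul_rpow (by positivity) (by positivity)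
            _ = 2 * m ^ ((1-α)/2) := by
                rw [← Real.rpow_mul (by norm_num : (0:ℝ) ≤ 2), hβ1,
                  Real.rpow_one, Real.sqrt_eq_rpow, ← Real.rpow_mul hm0.le]
                congr 1
                ring
        have hmono : (m ^ (α/2))⁻¹ ≤ (2 * B')⁻¹ :=
          inv_anti₀ (by positivity) hmB
        calc 2 * K = c ^ (1-α) * (Real.sqrt m)⁻¹ := by
              rw [hKdef, mul_inv]; ring
          _ ≤ (2 * m ^ ((1-α)/2)) * (Real.sqrt m)⁻¹ :=
              mul_le_mul_of_nonneg_right hc1 (by positivity)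
          _ = 2 * (m ^ ((1-α)/2) * m ^ (-(1/2:ℝ))) := by
              rw [Real.sqrt_eq_rpow, ← Real.rpow_neg hm0.le]; ring
          _ = 2 * m ^ (-(α/2)) := by
              rw [← Real.rpow_add hm0]
              congr 1
              ring
          _ = 2 * (m ^ (α/2))⁻¹ := by rw [Real.rpow_neg hm0.le]
          _ ≤ 2 * (2 * B')⁻¹ := mul_le_mul_of_nonneg_left hmono (by norm_num)
          _ = 1 / B' := by
              rw [mul_inv]
              field_simp
      -- conclude
      have hAD : B' * D ≤ A := by
        have h1 : D ≤ A * (2 * K) := by linarith [hDle2]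
        have h2 : A * (2 * K) ≤ A * (1 / B') :=
          mul_le_mul_of_nonneg_left h2K hA0
        have h3 : D ≤ A * (1 / B') := le_trans h1 h2
        calc B' * D ≤ B' * (A * (1 / B')) :=
              mul_le_mul_of_nonneg_left h3 hB'0.le
          _ = A := by field_simp
      exact (le_div_iff₀ hDpos).mpr hAD
  have : lambda1 ρ (fun t => ρ t ^ α) = lambda1 ρ σ := rfl
  rw [this]
  exact le_trans (le_max_left _ _) hmain
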